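/- Let P be a Markov kernel on a measurable space X, V : X → [0,∞) measurable, γ ∈ (0,1), K > 0 with ∫ V(y) P(x,dy) ≤ γ·V(x) + K for all x; let R > 2K/(1−γ), C = {V ≤ R}, and suppose P(x,·) ≥ ζ·ν for all x ∈ C, for some ζ ∈ (0,1) and probability measure ν. Fix ζ₀ ∈ (0,ζ), γ₀ ∈ (γ + 2K/R, 1), β = ζ₀/K and ζ̄ = max(1 − (ζ − ζ₀), (2 + Rβγ₀)/(2 + Rβ)). If π is a P-invariant probability measure (πP = π) with ∫V dπ < ∞, then for every probability measure μ with ∫V dμ < ∞ and every n ∈ ℕ, the total variation norm satisfies ‖μPⁿ − π‖ ≤ ρ_β(μPⁿ, π) ≤ ζ̄ⁿ · ρ_β(μ, π), where Pⁿ denotes the n-fold iterate of the kernel acting on measures. -/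

import Mathlib

open MeasureTheory ProbabilityTheory ENNReal

/-- The total variation measure `|μ - ν|` of the difference of two (finite) measures. -/
noncomputable def tvMeasure {X : Type*} [MeasurableSpace X] (μ ν : Measure X) : Measure X := by
  classical
  exact if h : IsFiniteMeasure μ ∧ IsFiniteMeasure ν then
    (@Measure.toSignedMeasure X _ μ h.1 - @Measure.toSignedMeasure X _ ν h.2).totalVariation
  else 0

/-- The weighted variational distance `ρ_β(μ, ν) = ∫ (1 + β V) d|μ - ν|`. -/
noncomputable def rhoBeta {X : Type*} [MeasurableSpace X] (β : ℝ) (V : X → ℝ)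
    (μ ν : Measure X) : ℝ≥0∞ :=
  ∫⁻ x, ENNReal.ofReal (1 + β * V x) ∂(tvMeasure μ ν)

/-- The `n`-fold action of a Markov kernel on a measure: `μ Pⁿ`. -/
noncomputable def kernelIter {X : Type*} [MeasurableSpace X] (P : Kernel X X)
    (μ : Measure X) (n : ℕ) : Measure X :=
  (fun ν : Measure X => ν.bind (fun x => P x))^[n] μ

set_option maxHeartbeats 1000000

section HMAux

open NNReal

lemma tvMeasure_eq {X : Type*} [MeasurableSpace X] (μ ν : Measure X)
    [IsFiniteMeasure μ] [IsFiniteMeasure ν] :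
    tvMeasure μ ν = (μ.toSignedMeasure - ν.toSignedMeasure).totalVariation := by
  unfold tvMeasure
  rw [dif_pos (⟨‹_›, ‹_›⟩ : IsFiniteMeasure μ ∧ IsFiniteMeasure ν)]

lemma ofReal_toReal_sub_le {a b c : ℝ≥0∞} (ha : a ≠ ⊤) (hb : b ≠ ⊤) (h : a ≤ b + c) :
    ENNReal.ofReal (a.toReal - b.toReal) ≤ c := by
  rcases eq_or_ne c ⊤ with hc | hc
  · simp [hc]
  have h' : a.toReal ≤ b.toReal + c.toReal := by
    have := ENNReal.toReal_mono (by finiteness) h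
    rwa [ENNReal.toReal_add hb hc] at this
  calc ENNReal.ofReal (a.toReal - b.toReal) ≤ ENNReal.ofReal c.toReal :=
        ENNReal.ofReal_le_ofReal (by linarith)
    _ = c := ENNReal.ofReal_toReal hc

lemma coe_mk_eq_ofReal (x : ℝ) (hx : 0 ≤ x) :
    ENNReal.ofNNReal (NNReal.mk x hx) = ENNReal.ofReal x := by
  have h : NNReal.mk x hx = Real.toNNReal x :=
    NNReal.coe_injective (by simp [Real.coe_toNNReal _ hx])
  rw [h]; rfl

lemma tvMeasure_le {X : Type*} [MeasurableSpace X] (μ ν l : Measure X)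
    [IsFiniteMeasure μ] [IsFiniteMeasure ν]
    (h : ∀ A, MeasurableSet A → μ A ≤ ν A + l A ∧ ν A ≤ μ A + l A) :
    tvMeasure μ ν ≤ l := by
  set s := μ.toSignedMeasure - ν.toSignedMeasure with hs
  obtain ⟨i, hi₁, hi₂, hi₃, hpos, hneg⟩ := s.toJordanDecomposition_spec
  rw [Measure.le_iff]
  intro A hA
  rw [tvMeasure_eq, ← hs, SignedMeasure.totalVariation, Measure.add_apply, hpos, hneg,
    SignedMeasure.toMeasureOfZeroLE_apply _ hi₂ hi₁ hA,
    SignedMeasure.toMeasureOfLEZero_apply _ hi₃ hi₁.compl hA,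
    coe_mk_eq_ofReal, coe_mk_eq_ofReal]
  have hsi : s (i ∩ A) = (μ (i ∩ A)).toReal - (ν (i ∩ A)).toReal :=
    Measure.toSignedMeasure_sub_apply (hi₁.inter hA)
  have hsc : -s (iᶜ ∩ A) = (ν (iᶜ ∩ A)).toReal - (μ (iᶜ ∩ A)).toReal := by
    rw [Measure.toSignedMeasure_sub_apply (hi₁.compl.inter hA), measureReal_def, measureReal_def]; ring
  rw [hsi, hsc]
  have h1 : ENNReal.ofReal ((μ (i ∩ A)).toReal - (ν (i ∩ A)).toReal) ≤ l (i ∩ A) :=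
    ofReal_toReal_sub_le (measure_ne_top _ _) (measure_ne_top _ _) (h _ (hi₁.inter hA)).1
  have h2 : ENNReal.ofReal ((ν (iᶜ ∩ A)).toReal - (μ (iᶜ ∩ A)).toReal) ≤ l (iᶜ ∩ A) :=
    ofReal_toReal_sub_le (measure_ne_top _ _) (measure_ne_top _ _) (h _ (hi₁.compl.inter hA)).2
  calc _ ≤ l (i ∩ A) + l (iᶜ ∩ A) := add_le_add h1 h2
    _ = l A := by
        rw [Set.inter_comm i A, Set.inter_comm iᶜ A, ← Set.diff_eq]
        exact measure_inter_add_diff A hi₁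

lemma jordan_balance {X : Type*} [MeasurableSpace X] (μ ν : Measure X)
    [IsFiniteMeasure μ] [IsFiniteMeasure ν] :
    μ + (μ.toSignedMeasure - ν.toSignedMeasure).toJordanDecomposition.negPart
      = ν + (μ.toSignedMeasure - ν.toSignedMeasure).toJordanDecomposition.posPart := by
  set s := μ.toSignedMeasure - ν.toSignedMeasure with hs
  ext A hA
  have h := congrArg (fun t : SignedMeasure X => t A) s.toSignedMeasure_toJordanDecomposition
  simp only [JordanDecomposition.toSignedMeasure] at h
  rw [VectorMeasure.sub_apply, Measure.toSignedMeasure_apply_measurable hA,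
    Measure.toSignedMeasure_apply_measurable hA, hs,
    Measure.toSignedMeasure_sub_apply hA] at h
  rw [Measure.add_apply, Measure.add_apply]
  have h1 := measure_ne_top μ A
  have h2 := measure_ne_top ν A
  have h3 := measure_ne_top s.toJordanDecomposition.posPart A
  have h4 := measure_ne_top s.toJordanDecomposition.negPart A
  rw [← ENNReal.toReal_eq_toReal_iff' (by finiteness) (by finiteness),
    ENNReal.toReal_add h1 h4, ENNReal.toReal_add h2 h3]
  simp only [measureReal_def, ← hs] at h
  linarith

lemma kernelIter_zero {X : Type*} [MeasurableSpace X] (P : Kernel X X) (μ : Measure X) :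
    kernelIter P μ 0 = μ := rfl

lemma kernelIter_succ {X : Type*} [MeasurableSpace X] (P : Kernel X X) (μ : Measure X) (n : ℕ) :
    kernelIter P μ (n + 1) = (kernelIter P μ n).bind (fun x => P x) := by
  unfold kernelIter
  exact Function.iterate_succ_apply' _ _ _

lemma jordan_exists {X : Type*} [MeasurableSpace X] (μ ν : Measure X)
    [IsFiniteMeasure μ] [IsFiniteMeasure ν] :
    ∃ ξp ξm : Measure X, IsFiniteMeasure ξp ∧ IsFiniteMeasure ξm ∧
      μ + ξm = ν + ξp ∧ tvMeasure μ ν = ξp + ξm :=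
  ⟨(μ.toSignedMeasure - ν.toSignedMeasure).toJordanDecomposition.posPart,
   (μ.toSignedMeasure - ν.toSignedMeasure).toJordanDecomposition.negPart,
   inferInstance, inferInstance, jordan_balance μ ν, by rw [tvMeasure_eq]; rfl⟩

lemma isProbabilityMeasure_bind {X : Type*} [MeasurableSpace X] (P : Kernel X X)
    [IsMarkovKernel P] (μ : Measure X) [IsProbabilityMeasure μ] :
    IsProbabilityMeasure (μ.bind (fun x => P x)) := by
  constructor
  rw [Measure.bind_apply MeasurableSet.univ P.measurable.aemeasurable]
  simp [measure_univ]

lemma contraction_step {X : Type*} [MeasurableSpace X]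
    (P : Kernel X X) [IsMarkovKernel P]
    (V : X → ℝ) (hVmeas : Measurable V) (hVnonneg : ∀ x, 0 ≤ V x)
    (γ K : ℝ) (hγ : γ ∈ Set.Ioo (0:ℝ) 1) (hK : 0 < K)
    (hdrift : ∀ x, ∫⁻ y, ENNReal.ofReal (V y) ∂(P x) ≤ ENNReal.ofReal (γ * V x + K))
    (R : ℝ) (hR : 2 * K / (1 - γ) < R)
    (ζ : ℝ) (hζ : ζ ∈ Set.Ioo (0:ℝ) 1)
    (ν : Measure X) [IsProbabilityMeasure ν]
    (hminor : ∀ x, V x ≤ R → ∀ A : Set X, MeasurableSet A →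
      ENNReal.ofReal ζ * ν A ≤ (P x) A)
    (ζ₀ : ℝ) (hζ₀ : ζ₀ ∈ Set.Ioo 0 ζ)
    (γ₀ : ℝ) (hγ₀ : γ₀ ∈ Set.Ioo (γ + 2 * K / R) 1)
    (β : ℝ) (hβ : β = ζ₀ / K)
    (ζbar : ℝ) (hζbar : ζbar = max (1 - (ζ - ζ₀)) ((2 + R * β * γ₀) / (2 + R * β)))
    (μ₁ μ₂ : Measure X) [IsProbabilityMeasure μ₁] [IsProbabilityMeasure μ₂] :
    rhoBeta β V (μ₁.bind (fun x => P x)) (μ₂.bind (fun x => P x))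
      ≤ ENNReal.ofReal ζbar * rhoBeta β V μ₁ μ₂ := by
  simp only [rhoBeta]
  -- basic real facts
  obtain ⟨hγ0, hγ1⟩ := hγ
  obtain ⟨hζ0, hζ1⟩ := hζ
  obtain ⟨hζ₀0, hζ₀ζ⟩ := hζ₀
  obtain ⟨hγ₀l, hγ₀1⟩ := hγ₀
  have hR0 : 0 < R := lt_trans (div_pos (by linarith) (by linarith)) hR
  have hβ0 : 0 < β := by rw [hβ]; positivity
  have hβK : β * K = ζ₀ := by rw [hβ]; field_simp
  have hζb1 : 1 - (ζ - ζ₀) ≤ ζbar := hζbar ▸ le_max_left _ _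
  have hRβ0 : 0 < 2 + R * β := by positivity
  have hζb2 : 2 + R * β * γ₀ ≤ ζbar * (2 + R * β) := by
    have h := hζbar ▸ le_max_right (1 - (ζ - ζ₀)) ((2 + R * β * γ₀) / (2 + R * β))
    calc 2 + R * β * γ₀ = ((2 + R * β * γ₀) / (2 + R * β)) * (2 + R * β) := by field_simp
      _ ≤ ζbar * (2 + R * β) := by nlinarith
  have hγ₀0 : 0 < γ₀ := by
    have : 0 < 2 * K / R := by positivity
    linarith
  have hζbγ₀ : γ₀ ≤ ζbar := by nlinarith
  have hζb0 : 0 ≤ ζbar := le_trans hγ₀0.le hζbγ₀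
  have hγγ₀ : γ < γ₀ := by
    have : 0 < 2 * K / R := by positivity
    linarith
  have h2KR : 2 * K < (γ₀ - γ) * R := by
    have h' : 2 * K / R < γ₀ - γ := by linarith
    calc 2 * K = (2 * K / R) * R := by field_simp
      _ < (γ₀ - γ) * R := by nlinarith
  -- case A real inequality
  have caseA : ∀ S : ℝ, R ≤ S → 2 + β * (γ * S + 2 * K) ≤ ζbar * (2 + β * S) := by
    intro S hS
    have h1 : γ * S + 2 * K ≤ γ₀ * S := by nlinarith
    have h2 : 2 + β * (γ₀ * S) ≤ ζbar * (2 + β * S) := by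
      nlinarith [mul_nonneg (mul_nonneg hβ0.le (sub_nonneg.mpr hS)) (sub_nonneg.mpr hζbγ₀)]
    nlinarith
  -- case B real inequality
  have caseB : ∀ S : ℝ, 0 ≤ S →
      2 - 2 * ζ + β * γ * S + 2 * β * K ≤ ζbar * (2 + β * S) := by
    intro S hS
    have hγζb : γ ≤ ζbar := le_trans hγγ₀.le hζbγ₀
    nlinarith [mul_nonneg (mul_nonneg hβ0.le hS) (sub_nonneg.mpr hγζb)]
  -- the weight function
  set g : X → ℝ≥0∞ := fun x => ENNReal.ofReal (1 + β * V x) with hgdef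
  have hg : Measurable g := (measurable_const.add (hVmeas.const_mul β)).ennreal_ofReal
  have hg1 : ∀ x, 1 ≤ g x := fun x =>
    ENNReal.one_le_ofReal.mpr (by nlinarith [hVnonneg x])
  -- drift bound for the weight
  have hT : ∀ x, ∫⁻ y, g y ∂(P x) ≤ ENNReal.ofReal (1 + β * (γ * V x + K)) := by
    intro x
    have hgeq : ∀ y, g y = 1 + ENNReal.ofReal β * ENNReal.ofReal (V y) := by
      intro y
      rw [hgdef, ← ENNReal.ofReal_mul hβ0.le, ← ENNReal.ofReal_one,
        ← ENNReal.ofReal_add zero_le_one (by nlinarith [hVnonneg y])]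
    have hVK : 0 ≤ γ * V x + K := by nlinarith [hVnonneg x]
    calc ∫⁻ y, g y ∂(P x)
        = ∫⁻ y, (1 + ENNReal.ofReal β * ENNReal.ofReal (V y)) ∂(P x) := by
          simp_rw [hgeq]
      _ = (P x) Set.univ + ENNReal.ofReal β * ∫⁻ y, ENNReal.ofReal (V y) ∂(P x) := by
          rw [lintegral_add_left measurable_const, lintegral_const, one_mul,
            lintegral_const_mul _ (hVmeas.ennreal_ofReal)]
      _ ≤ 1 + ENNReal.ofReal β * ENNReal.ofReal (γ * V x + K) := by
          rw [measure_univ]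
          exact add_le_add_right (mul_le_mul_right (hdrift x) _) _
      _ = ENNReal.ofReal (1 + β * (γ * V x + K)) := by
          rw [← ENNReal.ofReal_mul hβ0.le, ← ENNReal.ofReal_one,
            ← ENNReal.ofReal_add zero_le_one (by nlinarith)]
  have hposd : ∀ x : X, 0 ≤ β * (γ * V x + K) :=
    fun x => mul_nonneg hβ0.le (by nlinarith [hVnonneg x])
  -- the small set and the coupling remainder kernel
  set C : Set X := {x | V x ≤ R} with hCdef
  have hC : MeasurableSet C := measurableSet_le hVmeas measurable_const
  set r : X × X → ℝ≥0∞ := fun p =>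
    ENNReal.ofReal ζ * (C.indicator (fun _ => (1:ℝ≥0∞)) p.1) *
      (C.indicator (fun _ => (1:ℝ≥0∞)) p.2) with hrdef
  have hr_meas : Measurable r := by
    apply Measurable.mul
    · exact (measurable_const.mul ((measurable_one.indicator hC).comp measurable_fst))
    · exact (measurable_one.indicator hC).comp measurable_snd
  have hr_top : ∀ p, r p ≠ ⊤ := by
    intro p
    rw [hrdef]
    by_cases h1 : p.1 ∈ C <;> by_cases h2 : p.2 ∈ C <;>
      simp [Set.indicator_of_mem, Set.indicator_of_notMem, h1, h2]
  have hr_le : ∀ p : X × X, (r p • ν ≤ P p.1) ∧ (r p • ν ≤ P p.2) := by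
    intro p
    by_cases h1 : p.1 ∈ C
    · by_cases h2 : p.2 ∈ C
      · have hrp : r p = ENNReal.ofReal ζ := by
          simp [hrdef, Set.indicator_of_mem, h1, h2]
        rw [hrp]
        constructor
        · rw [Measure.le_iff]
          intro s hs
          rw [Measure.smul_apply, smul_eq_mul]
          exact hminor p.1 h1 s hs
        · rw [Measure.le_iff]
          intro s hs
          rw [Measure.smul_apply, smul_eq_mul]
          exact hminor p.2 h2 s hs
      · have hrp : r p = 0 := by simp [hrdef, Set.indicator_of_notMem, h2]
        rw [hrp, zero_smul]
        exact ⟨Measure.zero_le _, Measure.zero_le _⟩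
    · have hrp : r p = 0 := by simp [hrdef, Set.indicator_of_notMem, h1]
      rw [hrp, zero_smul]
      exact ⟨Measure.zero_le _, Measure.zero_le _⟩
  have hfin : ∀ p : X × X, (r p • ν) Set.univ < ⊤ := by
    intro p
    rw [Measure.smul_apply, smul_eq_mul, measure_univ, mul_one]
    exact lt_top_iff_ne_top.mpr (hr_top p)
  -- the pair kernel
  set D : X × X → Measure X := fun p => (P p.1 - r p • ν) + (P p.2 - r p • ν) with hDdef
  have hD_apply : ∀ p : X × X, ∀ s : Set X, MeasurableSet s →
      D p s = (P p.1 s - r p * ν s) + (P p.2 s - r p * ν s) := by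
    intro p s hs
    haveI : IsFiniteMeasure (r p • ν) := ⟨hfin p⟩
    rw [hDdef]
    simp only [Measure.add_apply]
    rw [Measure.sub_apply hs (hr_le p).1, Measure.sub_apply hs (hr_le p).2,
      Measure.smul_apply, smul_eq_mul]
  have hD_meas : Measurable D := by
    apply Measure.measurable_of_measurable_coe
    intro s hs
    have heq : (fun p => D p s) =
        fun p => (P p.1 s - r p * ν s) + (P p.2 s - r p * ν s) :=
      funext fun p => hD_apply p s hs
    rw [heq]
    exact (((P.measurable_coe hs).comp measurable_fst).sub
        (hr_meas.mul measurable_const)).add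
      (((P.measurable_coe hs).comp measurable_snd).sub (hr_meas.mul measurable_const))
  have hD_le : ∀ p : X × X, ∀ s : Set X, MeasurableSet s →
      P p.1 s ≤ P p.2 s + D p s ∧ P p.2 s ≤ P p.1 s + D p s := by
    intro p s hs
    rw [hD_apply p s hs]
    have hx1 : r p * ν s ≤ P p.1 s := by
      have := (hr_le p).1 s
      rwa [Measure.smul_apply, smul_eq_mul] at this
    have hx2 : r p * ν s ≤ P p.2 s := by
      have := (hr_le p).2 s
      rwa [Measure.smul_apply, smul_eq_mul] at this
    constructor
    · calc P p.1 s = (P p.1 s - r p * ν s) + r p * ν s := (tsub_add_cancel_of_le hx1).symm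
        _ ≤ (P p.1 s - r p * ν s) + P p.2 s := add_le_add_right hx2 _
        _ = P p.2 s + (P p.1 s - r p * ν s) := add_comm _ _
        _ ≤ P p.2 s + ((P p.1 s - r p * ν s) + (P p.2 s - r p * ν s)) :=
            add_le_add_right le_self_add _
    · calc P p.2 s = (P p.2 s - r p * ν s) + r p * ν s := (tsub_add_cancel_of_le hx2).symm
        _ ≤ (P p.2 s - r p * ν s) + P p.1 s := add_le_add_right hx1 _
        _ = P p.1 s + (P p.2 s - r p * ν s) := add_comm _ _
        _ ≤ P p.1 s + ((P p.1 s - r p * ν s) + (P p.2 s - r p * ν s)) :=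
            add_le_add_right le_add_self _
  -- integral of g against D
  have hD_int : ∀ p : X × X,
      ∫⁻ z, g z ∂(D p) ≤ ENNReal.ofReal ζbar * (g p.1 + g p.2) := by
    intro p
    haveI : IsFiniteMeasure (r p • ν) := ⟨hfin p⟩
    have hsplit : ∀ x : X, r p • ν ≤ P x →
        (∫⁻ z, g z ∂(P x - r p • ν)) + r p * ∫⁻ z, g z ∂ν = ∫⁻ z, g z ∂(P x) := by
      intro x hle
      rw [← smul_eq_mul, ← lintegral_smul_measure, ← lintegral_add_measure, Measure.sub_add_cancel_of_le hle]
    have hν1 : (1:ℝ≥0∞) ≤ ∫⁻ z, g z ∂ν := by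
      calc (1:ℝ≥0∞) = ∫⁻ _, 1 ∂ν := by simp
        _ ≤ ∫⁻ z, g z ∂ν := lintegral_mono hg1
    rw [hDdef]
    simp only
    rw [lintegral_add_measure]
    by_cases hp : p.1 ∈ C ∧ p.2 ∈ C
    · have hrp : r p = ENNReal.ofReal ζ := by
        simp [hrdef, Set.indicator_of_mem, hp.1, hp.2]
      have key : ∀ x : X, r p • ν ≤ P x →
          ∫⁻ z, g z ∂(P x - r p • ν) ≤ ENNReal.ofReal (1 + β * (γ * V x + K) - ζ) := by
        intro x hle
        have h1 : (∫⁻ z, g z ∂(P x - r p • ν)) + ENNReal.ofReal ζ ≤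
            ENNReal.ofReal (1 + β * (γ * V x + K)) := by
          calc (∫⁻ z, g z ∂(P x - r p • ν)) + ENNReal.ofReal ζ
              ≤ (∫⁻ z, g z ∂(P x - r p • ν)) + r p * ∫⁻ z, g z ∂ν := by
                apply add_le_add_right
                rw [hrp]
                calc ENNReal.ofReal ζ = ENNReal.ofReal ζ * 1 := (mul_one _).symm
                  _ ≤ ENNReal.ofReal ζ * ∫⁻ z, g z ∂ν := mul_le_mul_right hν1 _
            _ = ∫⁻ z, g z ∂(P x) := hsplit x hle
            _ ≤ _ := hT x
        have h2 := (ENNReal.cancel_of_ne (by simp)).le_tsub_of_add_le_right h1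
        calc ∫⁻ z, g z ∂(P x - r p • ν)
            ≤ ENNReal.ofReal (1 + β * (γ * V x + K)) - ENNReal.ofReal ζ := h2
          _ = ENNReal.ofReal (1 + β * (γ * V x + K) - ζ) :=
              (ENNReal.ofReal_sub _ hζ0.le).symm
      have hb1 : 0 ≤ 1 + β * (γ * V p.1 + K) - ζ := by linarith [hposd p.1]
      have hb2 : 0 ≤ 1 + β * (γ * V p.2 + K) - ζ := by linarith [hposd p.2]
      calc (∫⁻ z, g z ∂(P p.1 - r p • ν)) + ∫⁻ z, g z ∂(P p.2 - r p • ν)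
          ≤ ENNReal.ofReal (1 + β * (γ * V p.1 + K) - ζ) +
            ENNReal.ofReal (1 + β * (γ * V p.2 + K) - ζ) :=
            add_le_add (key p.1 (hr_le p).1) (key p.2 (hr_le p).2)
        _ = ENNReal.ofReal ((1 + β * (γ * V p.1 + K) - ζ) +
              (1 + β * (γ * V p.2 + K) - ζ)) := (ENNReal.ofReal_add hb1 hb2).symm
        _ ≤ ENNReal.ofReal (ζbar * ((1 + β * V p.1) + (1 + β * V p.2))) := by
            apply ENNReal.ofReal_le_ofReal
            have := caseB (V p.1 + V p.2) (by nlinarith [hVnonneg p.1, hVnonneg p.2])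
            nlinarith
        _ = ENNReal.ofReal ζbar * (g p.1 + g p.2) := by
            rw [ENNReal.ofReal_mul hζb0,
              ENNReal.ofReal_add (by nlinarith [hVnonneg p.1]) (by nlinarith [hVnonneg p.2])]
    · have key : ∀ x : X, r p • ν ≤ P x →
          ∫⁻ z, g z ∂(P x - r p • ν) ≤ ENNReal.ofReal (1 + β * (γ * V x + K)) := by
        intro x hle
        calc ∫⁻ z, g z ∂(P x - r p • ν)
            ≤ (∫⁻ z, g z ∂(P x - r p • ν)) + r p * ∫⁻ z, g z ∂ν := le_self_add
          _ = ∫⁻ z, g z ∂(P x) := hsplit x hle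
          _ ≤ _ := hT x
      have hS : R ≤ V p.1 + V p.2 := by
        rcases not_and_or.mp hp with h | h
        · have : R < V p.1 := by simpa [hCdef] using h
          nlinarith [hVnonneg p.2]
        · have : R < V p.2 := by simpa [hCdef] using h
          nlinarith [hVnonneg p.1]
      have hb1 : 0 ≤ 1 + β * (γ * V p.1 + K) := by linarith [hposd p.1]
      have hb2 : 0 ≤ 1 + β * (γ * V p.2 + K) := by linarith [hposd p.2]
      calc (∫⁻ z, g z ∂(P p.1 - r p • ν)) + ∫⁻ z, g z ∂(P p.2 - r p • ν)
          ≤ ENNReal.ofReal (1 + β * (γ * V p.1 + K)) +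
            ENNReal.ofReal (1 + β * (γ * V p.2 + K)) :=
            add_le_add (key p.1 (hr_le p).1) (key p.2 (hr_le p).2)
        _ = ENNReal.ofReal ((1 + β * (γ * V p.1 + K)) +
              (1 + β * (γ * V p.2 + K))) := (ENNReal.ofReal_add hb1 hb2).symm
        _ ≤ ENNReal.ofReal (ζbar * ((1 + β * V p.1) + (1 + β * V p.2))) := by
            apply ENNReal.ofReal_le_ofReal
            have := caseA (V p.1 + V p.2) hS
            nlinarith
        _ = ENNReal.ofReal ζbar * (g p.1 + g p.2) := by
            rw [ENNReal.ofReal_mul hζb0,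
              ENNReal.ofReal_add (by nlinarith [hVnonneg p.1]) (by nlinarith [hVnonneg p.2])]
  -- Jordan decomposition of μ₁ - μ₂
  haveI : IsProbabilityMeasure (μ₁.bind fun x => P x) := isProbabilityMeasure_bind P μ₁
  haveI : IsProbabilityMeasure (μ₂.bind fun x => P x) := isProbabilityMeasure_bind P μ₂
  obtain ⟨ξp, ξm, hfinp, hfinm, hbal, htv⟩ := jordan_exists μ₁ μ₂
  haveI := hfinp; haveI := hfinm
  have hmass : ξp Set.univ = ξm Set.univ := by
    have h := congrArg (fun τ : Measure X => τ Set.univ) hbal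
    simp only [Measure.add_apply, measure_univ] at h
    exact ((ENNReal.add_right_inj ENNReal.one_ne_top).mp h).symm
  by_cases hm0 : ξp Set.univ = 0
  · have hp0 : ξp = 0 := Measure.measure_univ_eq_zero.mp hm0
    have hq0 : ξm = 0 := Measure.measure_univ_eq_zero.mp (hmass ▸ hm0)
    have hμeq : μ₁ = μ₂ := by
      rw [hp0, hq0] at hbal
      simpa using hbal
    have hzero : tvMeasure (μ₂.bind fun x => P x) (μ₂.bind fun x => P x) = 0 := by
      rw [tvMeasure_eq, sub_self, SignedMeasure.totalVariation_zero]
    rw [hμeq, hzero, lintegral_zero_measure]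
    exact zero_le'
  · set m := ξp Set.univ with hmdef
    have hmtop : m ≠ ⊤ := measure_ne_top _ _
    set Γ := ξp.prod ξm with hΓdef
    set l : Measure X := m⁻¹ • Γ.bind D with hldef
    have hΓ1 : ∀ f : X → ℝ≥0∞, Measurable f → ∫⁻ p, f p.1 ∂Γ = (∫⁻ x, f x ∂ξp) * m := by
      intro f hf
      rw [hΓdef, MeasureTheory.lintegral_prod (fun p => f p.1) ((hf.comp measurable_fst).aemeasurable)]
      calc ∫⁻ x, ∫⁻ _, f x ∂ξm ∂ξp = ∫⁻ x, f x * ξm Set.univ ∂ξp := by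
            simp [lintegral_const]
        _ = (∫⁻ x, f x ∂ξp) * m := by
            rw [← hmass, lintegral_mul_const _ hf]
    have hΓ2 : ∀ f : X → ℝ≥0∞, Measurable f → ∫⁻ p, f p.2 ∂Γ = (∫⁻ x, f x ∂ξm) * m := by
      intro f hf
      rw [hΓdef, MeasureTheory.lintegral_prod (fun p => f p.2) ((hf.comp measurable_snd).aemeasurable)]
      have e : (fun x : X => ∫⁻ y, f (x, y).2 ∂ξm) = fun _ : X => ∫⁻ y, f y ∂ξm := rfl
      rw [e]
      exact lintegral_const _
    have hcore : ∀ A : Set X, MeasurableSet A →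
        (∫⁻ x, P x A ∂ξp) ≤ (∫⁻ x, P x A ∂ξm) + l A ∧
        (∫⁻ x, P x A ∂ξm) ≤ (∫⁻ x, P x A ∂ξp) + l A := by
      intro A hA
      have hZ : Γ.bind D A = ∫⁻ p, D p A ∂Γ := Measure.bind_apply hA hD_meas.aemeasurable
      have hlA : l A = m⁻¹ * ∫⁻ p, D p A ∂Γ := by
        rw [hldef, Measure.smul_apply, smul_eq_mul, hZ]
      have hPA1 : ∫⁻ p, P p.1 A ∂Γ = (∫⁻ x, P x A ∂ξp) * m := hΓ1 _ (P.measurable_coe hA)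
      have hPA2 : ∫⁻ p, P p.2 A ∂Γ = (∫⁻ x, P x A ∂ξm) * m := hΓ2 _ (P.measurable_coe hA)
      have halg : ∀ S Z : ℝ≥0∞, m * (S + m⁻¹ * Z) = S * m + Z := by
        intro S Z
        rw [mul_add, ← mul_assoc, ENNReal.mul_inv_cancel hm0 hmtop, one_mul, mul_comm m]
      constructor
      · rw [hlA]
        refine (ENNReal.mul_le_mul_iff_right hm0 hmtop).mp ?_
        calc m * ∫⁻ x, P x A ∂ξp = (∫⁻ x, P x A ∂ξp) * m := mul_comm _ _
          _ = ∫⁻ p, P p.1 A ∂Γ := hPA1.symm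
          _ ≤ ∫⁻ p, (P p.2 A + D p A) ∂Γ := lintegral_mono fun p => (hD_le p A hA).1
          _ = ∫⁻ p, P p.2 A ∂Γ + ∫⁻ p, D p A ∂Γ :=
              lintegral_add_left ((P.measurable_coe hA).comp measurable_snd) _
          _ = (∫⁻ x, P x A ∂ξm) * m + ∫⁻ p, D p A ∂Γ := by rw [hPA2]
          _ = m * ((∫⁻ x, P x A ∂ξm) + m⁻¹ * ∫⁻ p, D p A ∂Γ) := (halg _ _).symm
      · rw [hlA]
        refine (ENNReal.mul_le_mul_iff_right hm0 hmtop).mp ?_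
        calc m * ∫⁻ x, P x A ∂ξm = (∫⁻ x, P x A ∂ξm) * m := mul_comm _ _
          _ = ∫⁻ p, P p.2 A ∂Γ := hPA2.symm
          _ ≤ ∫⁻ p, (P p.1 A + D p A) ∂Γ := lintegral_mono fun p => (hD_le p A hA).2
          _ = ∫⁻ p, P p.1 A ∂Γ + ∫⁻ p, D p A ∂Γ :=
              lintegral_add_left ((P.measurable_coe hA).comp measurable_fst) _
          _ = (∫⁻ x, P x A ∂ξp) * m + ∫⁻ p, D p A ∂Γ := by rw [hPA1]
          _ = m * ((∫⁻ x, P x A ∂ξp) + m⁻¹ * ∫⁻ p, D p A ∂Γ) := (halg _ _).symm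
    have hl : ∀ A : Set X, MeasurableSet A →
        (μ₁.bind fun x => P x) A ≤ (μ₂.bind fun x => P x) A + l A ∧
        (μ₂.bind fun x => P x) A ≤ (μ₁.bind fun x => P x) A + l A := by
      intro A hA
      have hadd : (μ₁.bind fun x => P x) A + ∫⁻ x, P x A ∂ξm
          = (μ₂.bind fun x => P x) A + ∫⁻ x, P x A ∂ξp := by
        rw [Measure.bind_apply hA P.measurable.aemeasurable, Measure.bind_apply hA P.measurable.aemeasurable,
          ← lintegral_add_measure, ← lintegral_add_measure, hbal]
      have hfm : ∫⁻ x, P x A ∂ξm ≠ ⊤ := by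
        refine ne_top_of_le_ne_top (measure_ne_top ξm Set.univ) ?_
        calc ∫⁻ x, P x A ∂ξm ≤ ∫⁻ _, 1 ∂ξm := lintegral_mono fun x => prob_le_one
          _ = ξm Set.univ := by simp
      have hfp : ∫⁻ x, P x A ∂ξp ≠ ⊤ := by
        refine ne_top_of_le_ne_top (measure_ne_top ξp Set.univ) ?_
        calc ∫⁻ x, P x A ∂ξp ≤ ∫⁻ _, 1 ∂ξp := lintegral_mono fun x => prob_le_one
          _ = ξp Set.univ := by simp
      constructor
      · refine (ENNReal.add_le_add_iff_right hfm).mp ?_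
        calc (μ₁.bind fun x => P x) A + ∫⁻ x, P x A ∂ξm
            = (μ₂.bind fun x => P x) A + ∫⁻ x, P x A ∂ξp := hadd
          _ ≤ (μ₂.bind fun x => P x) A + ((∫⁻ x, P x A ∂ξm) + l A) :=
              add_le_add_right (hcore A hA).1 _
          _ = (μ₂.bind fun x => P x) A + l A + ∫⁻ x, P x A ∂ξm := by ring
      · refine (ENNReal.add_le_add_iff_right hfp).mp ?_
        calc (μ₂.bind fun x => P x) A + ∫⁻ x, P x A ∂ξp
            = (μ₁.bind fun x => P x) A + ∫⁻ x, P x A ∂ξm := hadd.symm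
          _ ≤ (μ₁.bind fun x => P x) A + ((∫⁻ x, P x A ∂ξp) + l A) :=
              add_le_add_right (hcore A hA).2 _
          _ = (μ₁.bind fun x => P x) A + l A + ∫⁻ x, P x A ∂ξp := by ring
    calc ∫⁻ x, g x ∂(tvMeasure (μ₁.bind fun x => P x) (μ₂.bind fun x => P x))
        ≤ ∫⁻ x, g x ∂l :=
          lintegral_mono' (tvMeasure_le _ _ l hl) le_rfl
      _ = m⁻¹ * ∫⁻ p, (∫⁻ z, g z ∂(D p)) ∂Γ := by
          rw [hldef, lintegral_smul_measure, smul_eq_mul, Measure.lintegral_bind hD_meas.aemeasurable hg.aemeasurable]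
      _ ≤ m⁻¹ * ∫⁻ p, ENNReal.ofReal ζbar * (g p.1 + g p.2) ∂Γ :=
          mul_le_mul_right (lintegral_mono hD_int) _
      _ = m⁻¹ * (ENNReal.ofReal ζbar * ((∫⁻ x, g x ∂ξp) * m + (∫⁻ x, g x ∂ξm) * m)) := by
          have e1 : ∫⁻ p, ENNReal.ofReal ζbar * (g p.1 + g p.2) ∂Γ
              = ENNReal.ofReal ζbar * ∫⁻ p, (g p.1 + g p.2) ∂Γ :=
            lintegral_const_mul _
              (by exact (hg.comp measurable_fst).add (hg.comp measurable_snd))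
          have e2 : ∫⁻ p, (g p.1 + g p.2) ∂Γ = (∫⁻ p, g p.1 ∂Γ) + ∫⁻ p, g p.2 ∂Γ :=
            lintegral_add_left (by exact hg.comp measurable_fst) _
          rw [e1, e2, hΓ1 g hg, hΓ2 g hg]
      _ = ENNReal.ofReal ζbar * ((∫⁻ x, g x ∂ξp) + ∫⁻ x, g x ∂ξm) := by
          rw [← add_mul,
            show m⁻¹ * (ENNReal.ofReal ζbar * (((∫⁻ x, g x ∂ξp) + ∫⁻ x, g x ∂ξm) * m))
              = (m⁻¹ * m) * (ENNReal.ofReal ζbar * ((∫⁻ x, g x ∂ξp) + ∫⁻ x, g x ∂ξm))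
              from by ring,
            ENNReal.inv_mul_cancel hm0 hmtop, one_mul]
      _ = ENNReal.ofReal ζbar * ∫⁻ x, g x ∂(tvMeasure μ₁ μ₂) := by
          rw [htv, lintegral_add_measure]


end HMAux

/-- Geometric convergence to the invariant measure in the weighted (and hence in the plain)
total variation distance, as a consequence of the Hairer–Mattingly contraction. -/
theorem hairer_mattingly_geometric_ergodicity
    {X : Type*} [MeasurableSpace X]
    (P : Kernel X X) [IsMarkovKernel P]
    (V : X → ℝ) (hVmeas : Measurable V) (hVnonneg : ∀ x, 0 ≤ V x)
    (γ K : ℝ) (hγ : γ ∈ Set.Ioo (0:ℝ) 1) (hK : 0 < K)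
    (hdrift : ∀ x, ∫⁻ y, ENNReal.ofReal (V y) ∂(P x) ≤ ENNReal.ofReal (γ * V x + K))
    (R : ℝ) (hR : 2 * K / (1 - γ) < R)
    (ζ : ℝ) (hζ : ζ ∈ Set.Ioo (0:ℝ) 1)
    (ν : Measure X) [IsProbabilityMeasure ν]
    (hminor : ∀ x, V x ≤ R → ∀ A : Set X, MeasurableSet A →
      ENNReal.ofReal ζ * ν A ≤ (P x) A)
    (ζ₀ : ℝ) (hζ₀ : ζ₀ ∈ Set.Ioo 0 ζ)
    (γ₀ : ℝ) (hγ₀ : γ₀ ∈ Set.Ioo (γ + 2 * K / R) 1)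
    (β : ℝ) (hβ : β = ζ₀ / K)
    (ζbar : ℝ) (hζbar : ζbar = max (1 - (ζ - ζ₀)) ((2 + R * β * γ₀) / (2 + R * β)))
    (π : Measure X) [IsProbabilityMeasure π]
    (hπinv : π.bind (fun x => P x) = π)
    (hπV : ∫⁻ x, ENNReal.ofReal (V x) ∂π < ⊤)
    (μ : Measure X) [IsProbabilityMeasure μ]
    (hμV : ∫⁻ x, ENNReal.ofReal (V x) ∂μ < ⊤) :
    ∀ n : ℕ,
      tvMeasure (kernelIter P μ n) π Set.univ ≤ rhoBeta β V (kernelIter P μ n) π ∧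
      rhoBeta β V (kernelIter P μ n) π ≤ ENNReal.ofReal ζbar ^ n * rhoBeta β V μ π := by
  have hβ0 : 0 < β := by
    rw [hβ]; exact div_pos hζ₀.1 hK
  have hiter : ∀ n, IsProbabilityMeasure (kernelIter P μ n) := by
    intro n
    induction n with
    | zero => rw [kernelIter_zero]; infer_instance
    | succ n ih =>
      rw [kernelIter_succ]
      exact @isProbabilityMeasure_bind X _ P _ _ ih
  have key : ∀ n, rhoBeta β V (kernelIter P μ n) π ≤
      ENNReal.ofReal ζbar ^ n * rhoBeta β V μ π := by
    intro n
    induction n with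
    | zero => rw [kernelIter_zero, pow_zero, one_mul]
    | succ n ih =>
      haveI := hiter n
      calc rhoBeta β V (kernelIter P μ (n + 1)) π
          = rhoBeta β V ((kernelIter P μ n).bind fun x => P x) (π.bind fun x => P x) := by
            rw [kernelIter_succ, hπinv]
        _ ≤ ENNReal.ofReal ζbar * rhoBeta β V (kernelIter P μ n) π :=
            contraction_step P V hVmeas hVnonneg γ K hγ hK hdrift R hR ζ hζ ν hminor
              ζ₀ hζ₀ γ₀ hγ₀ β hβ ζbar hζbar (kernelIter P μ n) π
        _ ≤ ENNReal.ofReal ζbar * (ENNReal.ofReal ζbar ^ n * rhoBeta β V μ π) :=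
            mul_le_mul_right ih _
        _ = ENNReal.ofReal ζbar ^ (n + 1) * rhoBeta β V μ π := by ring
  intro n
  haveI := hiter n
  refine ⟨?_, key n⟩
  have h1 : tvMeasure (kernelIter P μ n) π Set.univ
      = ∫⁻ _, 1 ∂(tvMeasure (kernelIter P μ n) π) := by simp
  rw [h1, rhoBeta]
  exact lintegral_mono fun x =>
    ENNReal.one_le_ofReal.mpr (by nlinarith [hVnonneg x, mul_nonneg hβ0.le (hVnonneg x)])
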